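/- arXiv:1906.03976 — 2 statements merged into one kernel-verified Lean document; each statement's English description precedes it below -/
import Mathlib

section
/- For every real p ≥ 2 there is a constant C > 0 such that for all real a, b: | |a+b|^(p-1)(a+b) − |a|^(p-1)a − p|a|^(p-1)b | ≤ C(|a|^(p-2) b² + |b|^p). -/
open Real Filter Set

private lemma derivB (p : ℝ) (hp : 2 ≤ p) (x : ℝ) :
    HasDerivAt (fun y : ℝ => |y| ^ (p - 1) * y) (p * |x| ^ (p - 1)) x := by
  have h1 : (1:ℝ) ≤ p - 1 := by linarith
  rcases lt_trichotomy x 0 with hx | hx | hx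
  · have hne : -x ≠ 0 := by intro h; apply absurd hx; simp [show x = 0 by linarith]
    have hd1 : HasDerivAt (fun y : ℝ => (-y) ^ (p - 1)) (-1 * (p-1) * (-x) ^ (p - 1 - 1)) x :=
      (hasDerivAt_neg x).rpow_const (Or.inl hne)
    have hd : HasDerivAt (fun y : ℝ => (-y) ^ (p - 1) * y)
        (-1 * (p-1) * (-x) ^ (p - 1 - 1) * x + (-x) ^ (p - 1) * 1) x :=
      hd1.mul (hasDerivAt_id x)
    have heq : (fun y : ℝ => |y| ^ (p - 1) * y) =ᶠ[nhds x] (fun y : ℝ => (-y) ^ (p - 1) * y) := by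
      filter_upwards [Iio_mem_nhds hx] with y hy
      rw [abs_of_neg hy]
    have hval : -1 * (p-1) * (-x) ^ (p - 1 - 1) * x + (-x) ^ (p - 1) * 1
        = p * |x| ^ (p - 1) := by
      rw [abs_of_neg hx]
      have : (-x) ^ (p - 1) = (-x) ^ (p - 1 - 1) * (-x) := by
        rw [← Real.rpow_add_one hne]; ring_nf
      rw [this]; ring
    exact hval ▸ (hd.congr_of_eventuallyEq heq)
  · subst hx
    rw [hasDerivAt_iff_tendsto_slope]
    have h0 : p * |(0:ℝ)| ^ (p - 1) = 0 := by
      rw [abs_zero, Real.zero_rpow (by linarith)]; ring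
    rw [h0]
    have hsl : ∀ y : ℝ, y ≠ 0 → slope (fun y : ℝ => |y| ^ (p - 1) * y) 0 y = |y| ^ (p - 1) := by
      intro y hy
      rw [slope_def_field]
      field_simp [abs_zero, Real.zero_rpow (show p - 1 ≠ 0 by linarith)]
      simp
    have htend : Tendsto (fun y : ℝ => |y| ^ (p - 1)) (nhds 0) (nhds 0) := by
      have hc : ContinuousAt (fun y : ℝ => |y| ^ (p - 1)) 0 :=
        (Real.continuousAt_rpow_const (|(0:ℝ)|) (p-1)
          (Or.inr (by linarith))).comp (continuous_abs.continuousAt (x := (0:ℝ)))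
      simpa [ContinuousAt, abs_zero, Real.zero_rpow (show p - 1 ≠ 0 by linarith)] using hc
    refine (htend.mono_left nhdsWithin_le_nhds).congr' ?_
    filter_upwards [self_mem_nhdsWithin] with y hy
    exact (hsl y hy).symm
  · have hne : x ≠ 0 := ne_of_gt hx
    have hd1 : HasDerivAt (fun y : ℝ => y ^ (p - 1)) ((p-1) * x ^ (p - 1 - 1)) x :=
      Real.hasDerivAt_rpow_const (Or.inl hne)
    have hd : HasDerivAt (fun y : ℝ => y ^ (p - 1) * y)
        ((p-1) * x ^ (p - 1 - 1) * x + x ^ (p - 1) * 1) x := hd1.mul (hasDerivAt_id x)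
    have heq : (fun y : ℝ => |y| ^ (p - 1) * y) =ᶠ[nhds x] (fun y : ℝ => y ^ (p - 1) * y) := by
      filter_upwards [Ioi_mem_nhds hx] with y hy
      rw [abs_of_pos hy]
    have hval : (p-1) * x ^ (p - 1 - 1) * x + x ^ (p - 1) * 1 = p * |x| ^ (p - 1) := by
      rw [abs_of_pos hx]
      have : x ^ (p - 1) = x ^ (p - 1 - 1) * x := by
        rw [← Real.rpow_add_one hne]; ring_nf
      rw [this]; ring
    exact hval ▸ (hd.congr_of_eventuallyEq heq)

private lemma lipA (q : ℝ) (hq : 1 ≤ q) {s t M : ℝ} (hs : 0 ≤ s) (hst : s ≤ t) (htM : t ≤ M) :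
    t ^ q - s ^ q ≤ q * M ^ (q - 1) * (t - s) := by
  have ht : 0 ≤ t := hs.trans hst
  have hM : 0 ≤ M := ht.trans htM
  rcases eq_or_lt_of_le hst with rfl | hlt
  · simp
  · obtain ⟨c, hc, hc'⟩ := exists_hasDerivAt_eq_slope (fun x => x ^ q) (fun x => q * x ^ (q-1))
      hlt
      (ContinuousOn.rpow_const continuousOn_id (fun x hx => Or.inr (by linarith)))
      (fun x hx => Real.hasDerivAt_rpow_const (Or.inl (ne_of_gt (lt_of_le_of_lt hs hx.1))))
    have hcbound : c ^ (q - 1) ≤ M ^ (q - 1) :=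
      Real.rpow_le_rpow (le_of_lt (lt_of_le_of_lt hs hc.1)) (le_trans (le_of_lt hc.2) htM)
        (by linarith)
    have hne : t - s ≠ 0 := by intro h; apply absurd hlt; simp [show s = t by linarith]
    have heq : t ^ q - s ^ q = q * c ^ (q-1) * (t - s) := by
      rw [hc']; field_simp
    rw [heq]
    have hq0 : (0:ℝ) ≤ q := by linarith
    have hts : (0:ℝ) ≤ t - s := by linarith
    have := mul_le_mul_of_nonneg_left hcbound hq0
    exact mul_le_mul_of_nonneg_right this hts

private lemma lipA' (q : ℝ) (hq : 1 ≤ q) {s t M : ℝ} (hs : 0 ≤ s) (ht : 0 ≤ t) (hsM : s ≤ M)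
    (htM : t ≤ M) : |t ^ q - s ^ q| ≤ q * M ^ (q - 1) * |t - s| := by
  rcases le_total s t with h | h
  · rw [abs_of_nonneg (sub_nonneg.2 (Real.rpow_le_rpow hs h (by linarith))),
      abs_of_nonneg (sub_nonneg.2 h)]
    exact lipA q hq hs h htM
  · rw [abs_sub_comm, abs_sub_comm t s,
      abs_of_nonneg (sub_nonneg.2 (Real.rpow_le_rpow ht h (by linarith))),
      abs_of_nonneg (sub_nonneg.2 h)]
    exact lipA q hq ht h hsM

private lemma sumpow (q x y : ℝ) (hq : 0 ≤ q) (hx : 0 ≤ x) (hy : 0 ≤ y) :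
    (x + y) ^ q ≤ 2 ^ q * (x ^ q + y ^ q) := by
  have h2 : (0:ℝ) ≤ 2 := by norm_num
  rcases le_total x y with h | h
  · calc (x + y) ^ q ≤ (2 * y) ^ q :=
          Real.rpow_le_rpow (by linarith) (by linarith) hq
      _ = 2 ^ q * y ^ q := Real.mul_rpow h2 hy
      _ ≤ 2 ^ q * (x ^ q + y ^ q) := by
          have := Real.rpow_nonneg hx q
          have := Real.rpow_nonneg h2 q
          nlinarith
  · calc (x + y) ^ q ≤ (2 * x) ^ q :=
          Real.rpow_le_rpow (by linarith) (by linarith) hq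
      _ = 2 ^ q * x ^ q := Real.mul_rpow h2 hx
      _ ≤ 2 ^ q * (x ^ q + y ^ q) := by
          have := Real.rpow_nonneg hy q
          have := Real.rpow_nonneg h2 q
          nlinarith

private lemma mvtB (p : ℝ) (hp : 2 ≤ p) (a b : ℝ) (hb : b ≠ 0) :
    ∃ ξ : ℝ, |ξ - a| ≤ |b| ∧
      |a + b| ^ (p - 1) * (a + b) - |a| ^ (p - 1) * a = p * |ξ| ^ (p - 1) * b := by
  have hcont : Continuous (fun y : ℝ => |y| ^ (p - 1) * y) :=
    continuous_iff_continuousAt.2 fun x => (derivB p hp x).continuousAt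
  rcases lt_or_gt_of_ne hb with hbneg | hbpos
  · obtain ⟨c, hc, hc'⟩ := exists_hasDerivAt_eq_slope (fun y : ℝ => |y| ^ (p - 1) * y)
      (fun x => p * |x| ^ (p - 1)) (show a + b < a by linarith) hcont.continuousOn
      (fun x _ => derivB p hp x)
    have hden : a - (a + b) = -b := by ring
    rw [hden, eq_div_iff (neg_ne_zero.2 hb)] at hc'
    refine ⟨c, ?_, by linear_combination hc'⟩
    rw [abs_of_neg hbneg, abs_le]
    exact ⟨by linarith [hc.1], by linarith [hc.2]⟩
  · obtain ⟨c, hc, hc'⟩ := exists_hasDerivAt_eq_slope (fun y : ℝ => |y| ^ (p - 1) * y)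
      (fun x => p * |x| ^ (p - 1)) (show a < a + b by linarith) hcont.continuousOn
      (fun x _ => derivB p hp x)
    have hden : a + b - a = b := by ring
    rw [hden, eq_div_iff hb] at hc'
    refine ⟨c, ?_, by linear_combination -hc'⟩
    rw [abs_of_pos hbpos, abs_le]
    exact ⟨by linarith [hc.1], by linarith [hc.2]⟩

theorem stmt_2 (p : ℝ) (hp : 2 ≤ p) :
    ∃ C : ℝ, 0 < C ∧ ∀ a b : ℝ,
      |(|a + b| ^ (p - 1) * (a + b) - |a| ^ (p - 1) * a - p * |a| ^ (p - 1) * b)| ≤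
        C * (|a| ^ (p - 2) * b ^ 2 + |b| ^ p) := by
  have hp0 : (0:ℝ) < p := by linarith
  have hp1 : (0:ℝ) < p - 1 := by linarith
  refine ⟨p * (p - 1) * 2 ^ (p - 2), by positivity, fun a b => ?_⟩
  rcases eq_or_ne b 0 with rfl | hb
  · have h0 : |a + 0| ^ (p - 1) * (a + 0) - |a| ^ (p - 1) * a - p * |a| ^ (p - 1) * 0 = 0 := by
      ring_nf
    rw [h0, abs_zero]
    positivity
  · obtain ⟨ξ, hξ1, hξ2⟩ := mvtB p hp a b hb
    set M := |a| + |b| with hM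
    have hbpos : (0:ℝ) < |b| := abs_pos.2 hb
    have haM : |a| ≤ M := le_add_of_nonneg_right (abs_nonneg b)
    have hξM : |ξ| ≤ M := by
      have h1 : a + (ξ - a) = ξ := by ring
      calc |ξ| = |a + (ξ - a)| := by rw [h1]
        _ ≤ |a| + |ξ - a| := abs_add_le _ _
        _ ≤ M := by rw [hM]; linarith
    have key := lipA' (p - 1) (by linarith) (abs_nonneg a) (abs_nonneg ξ) haM hξM
    rw [show p - 1 - 1 = p - 2 by ring] at key
    have hξa : abs (|ξ| - |a|) ≤ |b| := le_trans (abs_abs_sub_abs_le_abs_sub ξ a) hξ1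
    have hMnn : (0:ℝ) ≤ M ^ (p - 2) := Real.rpow_nonneg (by positivity) _
    have hexpr : |a + b| ^ (p - 1) * (a + b) - |a| ^ (p - 1) * a - p * |a| ^ (p - 1) * b
        = (|ξ| ^ (p - 1) - |a| ^ (p - 1)) * (p * b) := by linear_combination hξ2
    have hbp : |b| ^ (p - 2) * b ^ 2 = |b| ^ p := by
      rw [← sq_abs, ← Real.rpow_natCast |b| 2, ← Real.rpow_add hbpos]
      norm_num
    calc |(|a + b| ^ (p - 1) * (a + b) - |a| ^ (p - 1) * a - p * |a| ^ (p - 1) * b)|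
        = abs (|ξ| ^ (p - 1) - |a| ^ (p - 1)) * (p * |b|) := by
          rw [hexpr, abs_mul, abs_mul, abs_of_pos hp0]
      _ ≤ ((p - 1) * M ^ (p - 2) * |b|) * (p * |b|) := by
          have h1 : abs (|ξ| ^ (p - 1) - |a| ^ (p - 1)) ≤ (p - 1) * M ^ (p - 2) * |b| :=
            le_trans key (mul_le_mul_of_nonneg_left hξa (mul_nonneg hp1.le hMnn))
          have h2 : (0:ℝ) ≤ p * |b| := by positivity
          exact mul_le_mul_of_nonneg_right h1 h2
      _ = p * (p - 1) * M ^ (p - 2) * b ^ 2 := by rw [← sq_abs]; ring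
      _ ≤ p * (p - 1) * (2 ^ (p - 2) * (|a| ^ (p - 2) + |b| ^ (p - 2))) * b ^ 2 := by
          have hsp := sumpow (p - 2) (|a|) (|b|) (by linarith) (abs_nonneg a) (abs_nonneg b)
          rw [hM]
          exact mul_le_mul_of_nonneg_right
            (mul_le_mul_of_nonneg_left hsp (mul_nonneg hp0.le hp1.le)) (sq_nonneg b)
      _ = p * (p - 1) * 2 ^ (p - 2) * (|a| ^ (p - 2) * b ^ 2 + |b| ^ (p - 2) * b ^ 2) := by ring
      _ = p * (p - 1) * 2 ^ (p - 2) * (|a| ^ (p - 2) * b ^ 2 + |b| ^ p) := by rw [hbp]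
end

section
/- Let Φ : [τ₀,∞) → H be a C¹ curve in a Hilbert space H with ⟨Φ'(τ), Φ(τ)⟩ ≤ −(l+1)‖Φ(τ)‖² + e^(−τ) G(τ) ‖Φ(τ)‖, where G(τ) ≤ C e^(−(2l−1/2)τ) and Φ(τ₀) = 0, with l ≥ 1. Then ‖Φ(τ)‖ ≤ C' e^(−(l+1)τ) for all τ ≥ τ₀, for some constant C' depending only on C and l. -/
open Real

theorem stmt_11 {H : Type*} [NormedAddCommGroup H] [InnerProductSpace ℝ H]
    (l : ℕ) (hl : 1 ≤ l) (τ₀ C : ℝ) (hC : 0 < C)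
    (Φ : ℝ → H) (Φ' : ℝ → H) (G : ℝ → ℝ)
    (hderiv : ∀ τ, τ₀ ≤ τ → HasDerivAt Φ (Φ' τ) τ)
    (hineq : ∀ τ, τ₀ ≤ τ →
      (inner ℝ (Φ' τ) (Φ τ) : ℝ) ≤ -((l : ℝ) + 1) * ‖Φ τ‖ ^ 2
        + Real.exp (-τ) * G τ * ‖Φ τ‖)
    (hG : ∀ τ, τ₀ ≤ τ → G τ ≤ C * Real.exp (-(2 * (l : ℝ) - 1 / 2) * τ))
    (hΦ0 : Φ τ₀ = 0) :
    ∃ C' : ℝ, 0 < C' ∧ ∀ τ, τ₀ ≤ τ → ‖Φ τ‖ ≤ C' * Real.exp (-((l : ℝ) + 1) * τ) := by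
  have hl1 : (1 : ℝ) ≤ (l : ℝ) := by exact_mod_cast hl
  set n : ℝ := (l : ℝ) + 1 with hn
  set k : ℝ := (l : ℝ) - 1/2 with hk
  have hn0 : 0 < n := by simp only [hn]; linarith
  have hk0 : 0 < k := by simp only [hk]; linarith
  set M : ℝ := C / k * Real.exp (-k * τ₀) with hM
  have hM0 : 0 < M := by positivity
  refine ⟨M, hM0, ?_⟩
  intro τ hτ
  have key : ∀ ε : ℝ, 0 < ε → ‖Φ τ‖ ≤ M * Real.exp (-n * τ) + ε := by
    intro ε hε
    set s : ℝ → ℝ := fun t => Real.sqrt (‖Φ t‖ ^ 2 + ε ^ 2) with hs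
    set F : ℝ → ℝ := fun t =>
      ε * Real.exp (n * t) - C / k * Real.exp (-k * t) - Real.exp (n * t) * s t with hF
    have hq0 : ∀ t, 0 < ‖Φ t‖ ^ 2 + ε ^ 2 := fun t => by positivity
    have hst0 : ∀ t, 0 < s t := fun t => Real.sqrt_pos.2 (hq0 t)
    have hstε : ∀ t, ε ≤ s t := fun t => by
      rw [hs]
      calc ε = Real.sqrt (ε ^ 2) := by rw [Real.sqrt_sq hε.le]
      _ ≤ _ := Real.sqrt_le_sqrt (le_add_of_nonneg_left (by positivity))
    have hstΦ : ∀ t, ‖Φ t‖ ≤ s t := fun t => by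
      rw [hs]
      calc ‖Φ t‖ = Real.sqrt (‖Φ t‖ ^ 2) := by rw [Real.sqrt_sq (norm_nonneg _)]
      _ ≤ _ := Real.sqrt_le_sqrt (le_add_of_nonneg_right (by positivity))
    have hsq : ∀ t, s t ^ 2 = ‖Φ t‖ ^ 2 + ε ^ 2 := fun t =>
      Real.sq_sqrt (hq0 t).le
    -- derivative of F
    have hFd : ∀ t, τ₀ ≤ t → HasDerivAt F
        (ε * (Real.exp (n * t) * n) - C / k * (Real.exp (-k * t) * (-k)) -
          (Real.exp (n * t) * n * s t +
            Real.exp (n * t) * ((inner ℝ (Φ' t) (Φ t) : ℝ) / s t))) t := by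
      intro t ht
      have hΦ := hderiv t ht
      have hq : HasDerivAt (fun u => ‖Φ u‖ ^ 2 + ε ^ 2)
          (2 * (inner ℝ (Φ' t) (Φ t) : ℝ)) t := by
        have h1 : HasDerivAt (fun u => (inner ℝ (Φ u) (Φ u) : ℝ))
            ((inner ℝ (Φ t) (Φ' t) : ℝ) + (inner ℝ (Φ' t) (Φ t) : ℝ)) t :=
          hΦ.inner ℝ hΦ
        have h2 : HasDerivAt (fun u => (inner ℝ (Φ u) (Φ u) : ℝ) + ε ^ 2)
            ((inner ℝ (Φ t) (Φ' t) : ℝ) + (inner ℝ (Φ' t) (Φ t) : ℝ)) t := h1.add_const _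
        have h3 : (fun u => (inner ℝ (Φ u) (Φ u) : ℝ) + ε ^ 2)
            = fun u => ‖Φ u‖ ^ 2 + ε ^ 2 := by
          funext u; rw [real_inner_self_eq_norm_sq]
        rw [h3] at h2
        convert h2 using 1
        rw [real_inner_comm (Φ t) (Φ' t)]; ring
      have hsd : HasDerivAt s
          (1 / (2 * Real.sqrt (‖Φ t‖ ^ 2 + ε ^ 2)) * (2 * (inner ℝ (Φ' t) (Φ t) : ℝ))) t :=
        (Real.hasDerivAt_sqrt (hq0 t).ne').comp t hq
      have he1 : HasDerivAt (fun u => Real.exp (n * u)) (Real.exp (n * t) * n) t := by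
        simpa using HasDerivAt.exp ((hasDerivAt_id t).const_mul n)
      have he2 : HasDerivAt (fun u => Real.exp (-k * u)) (Real.exp (-k * t) * (-k)) t := by
        simpa using HasDerivAt.exp ((hasDerivAt_id t).const_mul (-k))
      have hFd' := ((he1.const_mul ε).sub (he2.const_mul (C / k))).sub (he1.mul hsd)
      refine hFd'.congr_deriv ?_
      have hst := (hst0 t).ne'
      rw [hs]
      field_simp
    -- derivative nonnegative for t ≥ τ₀
    have hFd0 : ∀ t, τ₀ ≤ t →
        0 ≤ ε * (Real.exp (n * t) * n) - C / k * (Real.exp (-k * t) * (-k)) -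
          (Real.exp (n * t) * n * s t +
            Real.exp (n * t) * ((inner ℝ (Φ' t) (Φ t) : ℝ) / s t)) := by
      intro t ht
      have hst := hst0 t
      have hP := hineq t ht
      have hGt := hG t ht
      have hE : 0 < Real.exp (n * t) := Real.exp_pos _
      -- bound the main term
      have h1 : Real.exp (n * t) * n * s t + Real.exp (n * t) * ((inner ℝ (Φ' t) (Φ t) : ℝ) / s t)
          ≤ Real.exp (n * t) * ((n * ε ^ 2 + Real.exp (-t) * G t * ‖Φ t‖) / s t) := by
        have : Real.exp (n * t) * n * s t + Real.exp (n * t) * ((inner ℝ (Φ' t) (Φ t) : ℝ) / s t)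
            = Real.exp (n * t) * ((n * s t ^ 2 + (inner ℝ (Φ' t) (Φ t) : ℝ)) / s t) := by
          field_simp
        rw [this]
        apply mul_le_mul_of_nonneg_left _ hE.le
        apply div_le_div_of_nonneg_right _ hst.le
        rw [hsq t]
        nlinarith [hP]
      have h2 : (n * ε ^ 2 + Real.exp (-t) * G t * ‖Φ t‖) / s t
          ≤ n * ε + Real.exp (-t) * (C * Real.exp (-(2 * (l : ℝ) - 1 / 2) * t)) := by
        rw [div_le_iff₀ hst]
        have hb1 : n * ε ^ 2 ≤ n * ε * s t := by
          calc n * ε ^ 2 = n * ε * ε := by ring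
            _ ≤ n * ε * s t := mul_le_mul_of_nonneg_left (hstε t) (by positivity)
        have hb2 : Real.exp (-t) * G t * ‖Φ t‖
            ≤ Real.exp (-t) * (C * Real.exp (-(2 * (l : ℝ) - 1 / 2) * t)) * s t := by
          rcases le_total (G t) 0 with hG0 | hG0
          · have ha : Real.exp (-t) * G t * ‖Φ t‖ ≤ 0 :=
              mul_nonpos_of_nonpos_of_nonneg
                (mul_nonpos_of_nonneg_of_nonpos (Real.exp_pos (-t)).le hG0) (norm_nonneg _)
            have hb : (0:ℝ) ≤ Real.exp (-t) * (C * Real.exp (-(2 * (l : ℝ) - 1 / 2) * t)) * s t := by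
              positivity
            linarith
          · have hΦs := hstΦ t
            have h1 : Real.exp (-t) * G t * ‖Φ t‖ ≤ Real.exp (-t) * G t * s t := by
              apply mul_le_mul_of_nonneg_left hΦs
              positivity
            have h2 : Real.exp (-t) * G t * s t
                ≤ Real.exp (-t) * (C * Real.exp (-(2 * (l : ℝ) - 1 / 2) * t)) * s t :=
              mul_le_mul_of_nonneg_right
                (mul_le_mul_of_nonneg_left hGt (Real.exp_pos (-t)).le) hst.le
            linarith
        nlinarith [hb1, hb2]
      have h3 : Real.exp (n * t) * (n * ε + Real.exp (-t) * (C * Real.exp (-(2 * (l : ℝ) - 1/2) * t)))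
          = ε * (Real.exp (n * t) * n) + C * Real.exp (-k * t) := by
        have e1 : Real.exp (n * t) * Real.exp (-t) * Real.exp (-(2 * (l : ℝ) - 1 / 2) * t)
            = Real.exp (-k * t) := by
          rw [← Real.exp_add, ← Real.exp_add]
          congr 1
          rw [hn, hk]; ring
        calc Real.exp (n * t) * (n * ε + Real.exp (-t) * (C * Real.exp (-(2 * (l:ℝ) - 1/2) * t)))
            = ε * (Real.exp (n * t) * n)
              + C * (Real.exp (n * t) * Real.exp (-t) * Real.exp (-(2 * (l:ℝ) - 1/2) * t)) := by
              ring
          _ = _ := by rw [e1]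
      have h4 : Real.exp (n * t) * ((n * ε ^ 2 + Real.exp (-t) * G t * ‖Φ t‖) / s t)
          ≤ ε * (Real.exp (n * t) * n) + C * Real.exp (-k * t) := by
        calc Real.exp (n * t) * ((n * ε ^ 2 + Real.exp (-t) * G t * ‖Φ t‖) / s t)
            ≤ Real.exp (n * t) * (n * ε + Real.exp (-t) * (C * Real.exp (-(2 * (l:ℝ) - 1/2) * t))) :=
              mul_le_mul_of_nonneg_left h2 hE.le
          _ = _ := h3
      have h5 : - (C / k * (Real.exp (-k * t) * (-k))) = C * Real.exp (-k * t) := by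
        field_simp
      linarith [h1.trans h4]
    -- F is monotone on [τ₀, ∞)
    have hmono : MonotoneOn F (Set.Ici τ₀) := by
      apply monotoneOn_of_hasDerivWithinAt_nonneg (convex_Ici τ₀)
      · intro t ht
        exact (hFd t ht).continuousAt.continuousWithinAt
      · intro t ht
        rw [interior_Ici] at ht
        exact (hFd t (le_of_lt ht)).hasDerivWithinAt
      · intro t ht
        rw [interior_Ici] at ht
        exact hFd0 t (le_of_lt ht)
    have hmF := hmono (Set.self_mem_Ici) (Set.mem_Ici.2 hτ) hτ
    -- compute F τ₀
    have hsτ₀ : s τ₀ = ε := by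
      rw [hs]
      simp only [hΦ0, norm_zero]
      rw [show (0:ℝ) ^ 2 + ε ^ 2 = ε ^ 2 by ring, Real.sqrt_sq hε.le]
    have hFτ₀ : F τ₀ = -(C / k * Real.exp (-k * τ₀)) := by
      show ε * Real.exp (n * τ₀) - C / k * Real.exp (-k * τ₀) - Real.exp (n * τ₀) * s τ₀ = _
      rw [hsτ₀]
      ring
    rw [hFτ₀] at hmF
    have hFτ : F τ = ε * Real.exp (n * τ) - C / k * Real.exp (-k * τ) - Real.exp (n * τ) * s τ :=
      rfl
    rw [hFτ] at hmF
    -- conclude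
    have hEτ : 0 < Real.exp (n * τ) := Real.exp_pos _
    have hbound : Real.exp (n * τ) * s τ ≤ ε * Real.exp (n * τ) + M := by
      have hpos : 0 < C / k * Real.exp (-k * τ) := by positivity
      simp only [hM]
      linarith
    have hsle : s τ ≤ ε + M * Real.exp (-n * τ) := by
      have hprod : Real.exp (n * τ) * Real.exp (-n * τ) = 1 := by
        rw [← Real.exp_add]; simp
      have h := mul_le_mul_of_nonneg_right hbound (Real.exp_pos (-n * τ)).le
      calc s τ = Real.exp (n * τ) * s τ * Real.exp (-n * τ) := by
            rw [mul_comm (Real.exp (n * τ)) (s τ), mul_assoc, hprod, mul_one]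
        _ ≤ (ε * Real.exp (n * τ) + M) * Real.exp (-n * τ) := h
        _ = ε * (Real.exp (n * τ) * Real.exp (-n * τ)) + M * Real.exp (-n * τ) := by ring
        _ = ε + M * Real.exp (-n * τ) := by rw [hprod, mul_one]
    calc ‖Φ τ‖ ≤ s τ := hstΦ τ
      _ ≤ ε + M * Real.exp (-n * τ) := hsle
      _ = M * Real.exp (-n * τ) + ε := by ring
  have := le_of_forall_pos_le_add (fun ε hε => key ε hε)
  simpa [hn] using this
end
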